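/- The Grassmannian G(k,n) of k-dimensional linear subspaces of ℂ^n, in its Plücker embedding into ℙ(Λ^k ℂ^n), is strongly concise: for each Plücker coordinate index I, there exists a k-plane whose Plücker coordinate at I vanishes but all other Plücker coordinates are nonzero. -/

import Mathlib

open MvPolynomial

/-- A polynomial vanishes identically on a set of points of affine space. -/
def vanishesOn {n : ℕ} (f : MvPolynomial (Fin n) ℂ) (S : Set (Fin n → ℂ)) : Prop :=
  ∀ v ∈ S, MvPolynomial.eval v f = 0

/-- Zariski closure of a set of points: the zero locus of its vanishing ideal. -/
def zclosure {n : ℕ} (S : Set (Fin n → ℂ)) : Set (Fin n → ℂ) :=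
  {v | ∀ f : MvPolynomial (Fin n) ℂ, vanishesOn f S → MvPolynomial.eval v f = 0}

/-- Zariski-irreducibility: nonempty and the vanishing ideal is prime. -/
def ZIrred {n : ℕ} (S : Set (Fin n → ℂ)) : Prop :=
  S.Nonempty ∧ ∀ f g : MvPolynomial (Fin n) ℂ,
    vanishesOn (f * g) S → vanishesOn f S ∨ vanishesOn g S

/-- Krull dimension of (the Zariski closure of) a set, as the order-theoretic
Krull dimension of chains of irreducible Zariski-closed subsets of it. -/
noncomputable def zdim {n : ℕ} (S : Set (Fin n → ℂ)) : WithBot ℕ∞ :=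
  Order.krullDim {T : Set (Fin n → ℂ) // zclosure T = T ∧ ZIrred T ∧ T ⊆ zclosure S}

/-- Projective equality of coordinate vectors: equality up to a nonzero scalar. -/
def ProjEq {n : ℕ} (v w : Fin n → ℂ) : Prop :=
  ∃ c : ℂ, c ≠ 0 ∧ w = c • v

/-- The set of (representatives of) Hadamard products of `m` points of `X`. -/
def hprodSet {n : ℕ} (X : Set (Fin n → ℂ)) (m : ℕ) : Set (Fin n → ℂ) :=
  {p | ∃ f : Fin m → (Fin n → ℂ), (∀ i, f i ∈ X) ∧ ProjEq (∏ i, f i) p}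

/-- The `m`-th Hadamard power of `X`: the Zariski closure of the set of Hadamard
products of `m` points of `X`. -/
def hpow {n : ℕ} (X : Set (Fin n → ℂ)) (m : ℕ) : Set (Fin n → ℂ) :=
  zclosure (hprodSet X m)

/-- `p` is an (actual) Hadamard product of `m` points of `X`. -/
def HadDecomp {n : ℕ} (X : Set (Fin n → ℂ)) (m : ℕ) (p : Fin n → ℂ) : Prop :=
  p ∈ hprodSet X m

/-- The Hadamard-`X`-rank of `p` is at most `r` (and finite, in particular). -/
def HrkLe {n : ℕ} (X : Set (Fin n → ℂ)) (r : ℕ) (p : Fin n → ℂ) : Prop :=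
  ∃ m, 1 ≤ m ∧ m ≤ r ∧ HadDecomp X m p

/-- The Hadamard-`X`-rank of `p` is exactly `r`. -/
def HrkEq {n : ℕ} (X : Set (Fin n → ℂ)) (r : ℕ) (p : Fin n → ℂ) : Prop :=
  HadDecomp X r p ∧ ∀ m, 1 ≤ m → m < r → ¬ HadDecomp X m p

/-- The Hadamard-`X`-rank of `p` is finite. -/
def HrkFin {n : ℕ} (X : Set (Fin n → ℂ)) (p : Fin n → ℂ) : Prop :=
  ∃ m, 1 ≤ m ∧ HadDecomp X m p

/-- `X ⊂ ℙ^{n-1}` is strongly concise: for each coordinate `i` there is a point of `X`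
whose `i`-th coordinate vanishes and all other coordinates are nonzero. -/
def StronglyConcise {n : ℕ} (X : Set (Fin n → ℂ)) : Prop :=
  ∀ i : Fin n, ∃ v ∈ X, v i = 0 ∧ ∀ j ≠ i, v j ≠ 0

/-! ### Auxiliary machinery for the proof of `stmt2` -/

/-- Multilinearity of the determinant in a single column, for a `Finset`-indexed sum. -/
lemma det_updateColumn_finset_sum {R : Type*} [CommRing R] {m : Type*} [DecidableEq m]
    [Fintype m] {ι : Type*} [DecidableEq ι] (A : Matrix m m R) (p : m) (S : Finset ι)
    (u : ι → m → R) :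
    (A.updateCol p (fun i => ∑ b ∈ S, u b i)).det
      = ∑ b ∈ S, (A.updateCol p (u b)).det := by
  induction S using Finset.induction_on with
  | empty =>
      simp only [Finset.sum_empty]
      exact Matrix.det_eq_zero_of_column_eq_zero p fun i => by
        simp [Matrix.updateCol_self]
  | @insert c S hc ih =>
      have h1 : (fun i => ∑ b ∈ insert c S, u b i)
          = u c + fun i => ∑ b ∈ S, u b i := by
        funext i; simp [Finset.sum_insert hc]
      rw [h1, Matrix.det_updateCol_add, ih, Finset.sum_insert hc]

/-- A "transposed Vandermonde" matrix with injective nodes has nonzero determinant. -/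
lemma det_powMatrix_ne_zero {R : Type*} [CommRing R] [IsDomain R] {k : ℕ} {w : Fin k → R}
    (hw : Function.Injective w) :
    (Matrix.of fun (i q : Fin k) => w q ^ (i : ℕ)).det ≠ 0 := by
  have h : (Matrix.of fun (i q : Fin k) => w q ^ (i : ℕ)) = (Matrix.vandermonde w).transpose := by
    ext i q
    simp [Matrix.vandermonde, Matrix.transpose_apply]
  rw [h, Matrix.det_transpose, Matrix.det_vandermonde]
  refine Finset.prod_ne_zero_iff.mpr fun i _ => Finset.prod_ne_zero_iff.mpr fun j hj => ?_
  exact sub_ne_zero.mpr fun hEq => (Finset.mem_Ioi.mp hj).ne' (hw hEq)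

/-- The polynomial matrix: moment-curve columns, except the column at `a`, which is the sum of
the moment columns of the other indices of `I`. -/
noncomputable def Pmat (k n : ℕ) (I : Finset (Fin n)) (a : Fin n) :
    Matrix (Fin k) (Fin n) (MvPolynomial (Fin n) ℂ) :=
  Matrix.of fun i j =>
    if j = a then ∑ b ∈ I.erase a, (X b : MvPolynomial (Fin n) ℂ) ^ (i : ℕ)
    else X j ^ (i : ℕ)

lemma eval_subdet {k n : ℕ} (I : Finset (Fin n)) (a : Fin n) (s : Fin n → ℂ)
    (J : Finset (Fin n)) (hJ : J.card = k) :
    eval s ((Matrix.of fun (i q : Fin k) => Pmat k n I a i ↑(J.orderIsoOfFin hJ q)).det)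
      = (Matrix.of fun (i q : Fin k) =>
          if (↑(J.orderIsoOfFin hJ q) : Fin n) = a then ∑ b ∈ I.erase a, s b ^ (i : ℕ)
          else s ↑(J.orderIsoOfFin hJ q) ^ (i : ℕ)).det := by
  rw [RingHom.map_det]
  congr 1
  ext i q
  simp [Pmat, RingHom.mapMatrix_apply, Matrix.map_apply, apply_ite (eval s), map_sum]
  rfl

lemma coe_iso_eq_iff {n k : ℕ} (J : Finset (Fin n)) (hJ : J.card = k) (a : Fin n)
    (haJ : a ∈ J) (q : Fin k) :
    (↑(J.orderIsoOfFin hJ q) : Fin n) = a ↔ q = (J.orderIsoOfFin hJ).symm ⟨a, haJ⟩ := by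
  constructor
  · intro h
    have h2 : J.orderIsoOfFin hJ q = ⟨a, haJ⟩ := Subtype.ext h
    have h3 := congrArg (J.orderIsoOfFin hJ).symm h2
    simpa using h3
  · rintro rfl
    simp

lemma det_expand {k n : ℕ} (I J : Finset (Fin n)) (hJ : J.card = k) (a : Fin n)
    (haJ : a ∈ J) (s : Fin n → ℂ) :
    (Matrix.of fun (i q : Fin k) =>
        if (↑(J.orderIsoOfFin hJ q) : Fin n) = a then ∑ b ∈ I.erase a, s b ^ (i : ℕ)
        else s ↑(J.orderIsoOfFin hJ q) ^ (i : ℕ)).det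
      = ∑ b ∈ I.erase a,
        (Matrix.of fun (i q : Fin k) =>
          if (↑(J.orderIsoOfFin hJ q) : Fin n) = a then s b ^ (i : ℕ)
          else s ↑(J.orderIsoOfFin hJ q) ^ (i : ℕ)).det := by
  classical
  set p : Fin k := (J.orderIsoOfFin hJ).symm ⟨a, haJ⟩ with hp
  set A : Matrix (Fin k) (Fin k) ℂ :=
    Matrix.of fun (i q : Fin k) => s ↑(J.orderIsoOfFin hJ q) ^ (i : ℕ) with hA
  have key : ∀ u : Fin k → ℂ,
      (Matrix.of fun (i q : Fin k) =>
        if (↑(J.orderIsoOfFin hJ q) : Fin n) = a then u i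
        else s ↑(J.orderIsoOfFin hJ q) ^ (i : ℕ)) = A.updateCol p u := by
    intro u
    ext i q
    rw [Matrix.updateCol_apply, Matrix.of_apply]
    by_cases hq : q = p
    · rw [if_pos hq, if_pos ((coe_iso_eq_iff J hJ a haJ q).mpr (hq.trans hp))]
    · rw [if_neg hq, if_neg fun h => hq (((coe_iso_eq_iff J hJ a haJ q).mp h).trans hp.symm)]
      rfl
  rw [key (fun i => ∑ b ∈ I.erase a, s b ^ (i : ℕ))]
  refine (det_updateColumn_finset_sum A p (I.erase a) fun b i => s b ^ (i : ℕ)).trans ?_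
  exact Finset.sum_congr rfl fun b _ => by rw [key fun i => s b ^ (i : ℕ)]

lemma term_zero {k n : ℕ} (J : Finset (Fin n)) (hJ : J.card = k) {a : Fin n} (haJ : a ∈ J)
    (s : Fin n → ℂ) (b : Fin n) {c : Fin n} (hc : c ∈ J) (hca : c ≠ a) (hsc : s b = s c) :
    (Matrix.of fun (i q : Fin k) =>
      if (↑(J.orderIsoOfFin hJ q) : Fin n) = a then s b ^ (i : ℕ)
      else s ↑(J.orderIsoOfFin hJ q) ^ (i : ℕ)).det = 0 := by
  classical
  set p : Fin k := (J.orderIsoOfFin hJ).symm ⟨a, haJ⟩ with hp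
  set qc : Fin k := (J.orderIsoOfFin hJ).symm ⟨c, hc⟩ with hqc
  have h1 : (↑(J.orderIsoOfFin hJ p) : Fin n) = a := by simp [hp]
  have h2 : (↑(J.orderIsoOfFin hJ qc) : Fin n) = c := by simp [hqc]
  have hne : p ≠ qc := by
    intro h
    apply hca
    rw [← h2, ← h, h1]
  refine Matrix.det_zero_of_column_eq hne fun i => ?_
  rw [Matrix.of_apply, Matrix.of_apply, h1, h2, if_pos rfl, if_neg hca, hsc]

lemma term_ne_zero {k n : ℕ} (J : Finset (Fin n)) (hJ : J.card = k) {a : Fin n} (haJ : a ∈ J)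
    (s : Fin n → ℂ) {b0 : Fin n} (hb0 : b0 ∉ J)
    (hinj : ∀ x y : Fin n, (x ∈ J ∨ x = b0) → (y ∈ J ∨ y = b0) → s x = s y → x = y) :
    (Matrix.of fun (i q : Fin k) =>
      if (↑(J.orderIsoOfFin hJ q) : Fin n) = a then s b0 ^ (i : ℕ)
      else s ↑(J.orderIsoOfFin hJ q) ^ (i : ℕ)).det ≠ 0 := by
  classical
  set g : Fin k → Fin n := fun q =>
    if (↑(J.orderIsoOfFin hJ q) : Fin n) = a then b0 else ↑(J.orderIsoOfFin hJ q) with hg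
  have hform : (Matrix.of fun (i q : Fin k) =>
      if (↑(J.orderIsoOfFin hJ q) : Fin n) = a then s b0 ^ (i : ℕ)
      else s ↑(J.orderIsoOfFin hJ q) ^ (i : ℕ))
      = Matrix.of fun (i q : Fin k) => s (g q) ^ (i : ℕ) := by
    ext i q
    rw [Matrix.of_apply, Matrix.of_apply]
    simp only [hg]
    by_cases h : (↑(J.orderIsoOfFin hJ q) : Fin n) = a
    · rw [if_pos h, if_pos h]
    · rw [if_neg h, if_neg h]
  rw [hform]
  apply det_powMatrix_ne_zero
  intro q1 q2 hq
  have hgmem : ∀ q : Fin k, g q ∈ J ∨ g q = b0 := by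
    intro q
    by_cases h : (↑(J.orderIsoOfFin hJ q) : Fin n) = a
    · right; simp only [hg]; exact if_pos h
    · left
      have : g q = ↑(J.orderIsoOfFin hJ q) := by simp only [hg]; exact if_neg h
      rw [this]; exact (J.orderIsoOfFin hJ q).2
  have hgeq : g q1 = g q2 := hinj _ _ (hgmem q1) (hgmem q2) hq
  by_cases h1 : (↑(J.orderIsoOfFin hJ q1) : Fin n) = a <;>
    by_cases h2 : (↑(J.orderIsoOfFin hJ q2) : Fin n) = a
  · rw [coe_iso_eq_iff J hJ a haJ] at h1 h2
    rw [h1, h2]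
  · exfalso
    simp only [hg] at hgeq
    rw [if_pos h1, if_neg h2] at hgeq
    apply hb0
    rw [hgeq]
    exact (J.orderIsoOfFin hJ q2).2
  · exfalso
    simp only [hg] at hgeq
    rw [if_neg h1, if_pos h2] at hgeq
    apply hb0
    rw [← hgeq]
    exact (J.orderIsoOfFin hJ q1).2
  · simp only [hg] at hgeq
    rw [if_neg h1, if_neg h2] at hgeq
    exact EquivLike.injective (J.orderIsoOfFin hJ) (Subtype.ext hgeq)

/-- the Grassmannian in its Plücker embedding is strongly concise: for every
`k`-element index set `I` there is a `k × n` matrix whose maximal minor at `I` vanishes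
while all other maximal minors are nonzero. -/
theorem stmt2 (k n : ℕ) (hk : 1 ≤ k) (hkn : k ≤ n)
    (I : Finset (Fin n)) (hI : I.card = k) :
    ∃ M : Matrix (Fin k) (Fin n) ℂ,
      (Matrix.of fun i j => M i (↑(I.orderIsoOfFin hI j))).det = 0 ∧
      ∀ (J : Finset (Fin n)) (hJ : J.card = k), J ≠ I →
        (Matrix.of fun i j => M i (↑(J.orderIsoOfFin hJ j))).det ≠ 0 := by
  classical
  have hIne : I.Nonempty := Finset.card_pos.mp (by rw [hI]; exact hk)
  obtain ⟨a, haI⟩ := hIne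
  -- the polynomial minors, packaged to avoid dependent types
  let F : Finset (Fin n) → MvPolynomial (Fin n) ℂ := fun J =>
    if hJ : J.card = k then
      (Matrix.of fun (i q : Fin k) => Pmat k n I a i ↑(J.orderIsoOfFin hJ q)).det
    else 1
  have hF : ∀ (J : Finset (Fin n)) (hJ : J.card = k), J ≠ I → F J ≠ 0 := by
    intro J hJ hne h0
    rw [show F J = (Matrix.of fun (i q : Fin k) =>
        Pmat k n I a i ↑(J.orderIsoOfFin hJ q)).det from dif_pos hJ] at h0
    by_cases haJ : a ∈ J
    · -- the hard case: `a ∈ J`, `J ≠ I`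
      have hk2 : 2 ≤ k := by
        by_contra h
        have hJ1 : J.card = 1 := by omega
        have hI1 : I.card = 1 := by omega
        obtain ⟨x, hx⟩ := Finset.card_eq_one.mp hJ1
        obtain ⟨y, hy⟩ := Finset.card_eq_one.mp hI1
        have hax : a = x := Finset.mem_singleton.mp (hx ▸ haJ)
        have hay : a = y := Finset.mem_singleton.mp (hy ▸ haI)
        exact hne (by rw [hx, hy, ← hax, ← hay])
      have herase : (J.erase a).Nonempty := by
        rw [← Finset.card_pos, Finset.card_erase_of_mem haJ, hJ]; omega
      obtain ⟨j0, hj0⟩ := herase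
      obtain ⟨hj0a, hj0J⟩ := Finset.mem_erase.mp hj0
      have hIJ : ∃ b0 ∈ I, b0 ∉ J := by
        by_contra h
        push_neg at h
        have hsub : I ⊆ J := fun x hx => h x hx
        exact hne (Finset.eq_of_subset_of_card_le hsub (by rw [hI, hJ])).symm
      obtain ⟨b0, hb0I, hb0J⟩ := hIJ
      have hb0a : b0 ≠ a := fun h => hb0J (h ▸ haJ)
      set s : Fin n → ℂ := fun j =>
        if j ∈ (I.erase a) \ insert b0 J then ((j0 : Fin n).val : ℂ)
        else ((j : Fin n).val : ℂ) with hs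
      have hsval : ∀ x : Fin n, x ∈ J ∨ x = b0 → s x = (x.val : ℂ) := by
        intro x hx
        have hnot : x ∉ (I.erase a) \ insert b0 J := by
          intro hmem
          obtain ⟨_, hnotin⟩ := Finset.mem_sdiff.mp hmem
          rcases hx with h | h
          · exact hnotin (Finset.mem_insert_of_mem h)
          · exact hnotin (h ▸ Finset.mem_insert_self b0 J)
        simp only [hs]
        rw [if_neg hnot]
      have hinj : ∀ x y : Fin n, (x ∈ J ∨ x = b0) → (y ∈ J ∨ y = b0) → s x = s y → x = y := by
        intro x y hx hy hxy
        rw [hsval x hx, hsval y hy] at hxy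
        exact Fin.val_injective (Nat.cast_injective hxy)
      have heval := congrArg (eval s) h0
      rw [map_zero, eval_subdet I a s J hJ, det_expand I J hJ a haJ s] at heval
      have hb0mem : b0 ∈ I.erase a := Finset.mem_erase.mpr ⟨hb0a, hb0I⟩
      have hz : ∀ b ∈ I.erase a, b ≠ b0 →
          (Matrix.of fun (i q : Fin k) =>
            if (↑(J.orderIsoOfFin hJ q) : Fin n) = a then s b ^ (i : ℕ)
            else s ↑(J.orderIsoOfFin hJ q) ^ (i : ℕ)).det = 0 := by
        intro b hb hbne
        obtain ⟨hba, hbI⟩ := Finset.mem_erase.mp hb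
        by_cases hbJ : b ∈ J
        · exact term_zero J hJ haJ s b hbJ hba rfl
        · have hmem : b ∈ (I.erase a) \ insert b0 J := by
            refine Finset.mem_sdiff.mpr ⟨hb, fun h => ?_⟩
            rcases Finset.mem_insert.mp h with h | h
            exacts [hbne h, hbJ h]
          have hsb : s b = (j0.val : ℂ) := by
            simp only [hs]
            rw [if_pos hmem]
          have hsj0 : s j0 = (j0.val : ℂ) := hsval j0 (Or.inl hj0J)
          exact term_zero J hJ haJ s b hj0J hj0a (hsb.trans hsj0.symm)
      rw [Finset.sum_eq_single_of_mem b0 hb0mem hz] at heval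
      exact term_ne_zero J hJ haJ s hb0J hinj heval
    · -- the easy case: `a ∉ J`, pure Vandermonde
      set s : Fin n → ℂ := fun j => (j.val : ℂ) with hs
      have heval := congrArg (eval s) h0
      rw [map_zero, eval_subdet I a s J hJ] at heval
      have hform : (Matrix.of fun (i q : Fin k) =>
          if (↑(J.orderIsoOfFin hJ q) : Fin n) = a then ∑ b ∈ I.erase a, s b ^ (i : ℕ)
          else s ↑(J.orderIsoOfFin hJ q) ^ (i : ℕ))
          = Matrix.of fun (i q : Fin k) => s ↑(J.orderIsoOfFin hJ q) ^ (i : ℕ) := by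
        ext i q
        have hne' : (↑(J.orderIsoOfFin hJ q) : Fin n) ≠ a :=
          fun h => haJ (h ▸ (J.orderIsoOfFin hJ q).2)
        rw [Matrix.of_apply, Matrix.of_apply, if_neg hne']
      rw [hform] at heval
      have hwinj : Function.Injective (fun q : Fin k => s ↑(J.orderIsoOfFin hJ q)) := by
        intro q1 q2 h
        apply EquivLike.injective (J.orderIsoOfFin hJ)
        apply Subtype.ext
        exact Fin.val_injective (Nat.cast_injective h)
      exact det_powMatrix_ne_zero hwinj heval
  -- a common point where all the relevant minors are nonzero
  let Q : MvPolynomial (Fin n) ℂ :=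
    ∏ J ∈ Finset.univ.filter (fun J : Finset (Fin n) => J.card = k ∧ J ≠ I), F J
  have hQ : Q ≠ 0 := by
    refine Finset.prod_ne_zero_iff.mpr fun J hJmem => ?_
    obtain ⟨h1, h2⟩ := (Finset.mem_filter.mp hJmem).2
    exact hF J h1 h2
  obtain ⟨t, ht⟩ : ∃ t : Fin n → ℂ, eval t Q ≠ 0 := by
    by_contra h
    push_neg at h
    exact hQ (MvPolynomial.funext fun x => by simp [h x])
  refine ⟨Matrix.of fun i j => eval t (Pmat k n I a i j), ?_, ?_⟩
  · -- the minor at `I` vanishes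
    have bridge : (Matrix.of fun (i : Fin k) (q : Fin k) =>
        (Matrix.of fun i j => eval t (Pmat k n I a i j)) i (↑(I.orderIsoOfFin hI q))).det
        = eval t ((Matrix.of fun (i q : Fin k) => Pmat k n I a i ↑(I.orderIsoOfFin hI q)).det) := by
      rw [RingHom.map_det]
      congr 1
    rw [bridge, eval_subdet I a t I hI, det_expand I I hI a haI t]
    refine Finset.sum_eq_zero fun b hb => ?_
    obtain ⟨hba, hbI⟩ := Finset.mem_erase.mp hb
    exact term_zero I hI haI t b hbI hba rfl
  · -- all other minors are nonzero
    intro J hJ hne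
    have bridge : (Matrix.of fun (i : Fin k) (q : Fin k) =>
        (Matrix.of fun i j => eval t (Pmat k n I a i j)) i (↑(J.orderIsoOfFin hJ q))).det
        = eval t ((Matrix.of fun (i q : Fin k) => Pmat k n I a i ↑(J.orderIsoOfFin hJ q)).det) := by
      rw [RingHom.map_det]
      congr 1
    rw [bridge]
    intro h0
    apply ht
    have hmem : J ∈ Finset.univ.filter (fun J : Finset (Fin n) => J.card = k ∧ J ≠ I) :=
      Finset.mem_filter.mpr ⟨Finset.mem_univ _, hJ, hne⟩
    obtain ⟨c, hc⟩ := Finset.dvd_prod_of_mem F hmem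
    have hFJ : F J = (Matrix.of fun (i q : Fin k) =>
        Pmat k n I a i ↑(J.orderIsoOfFin hJ q)).det := dif_pos hJ
    rw [show Q = F J * c from hc, map_mul, hFJ, h0, zero_mul]
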